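/- For every integer n and every complex number z with Re(z) > 0, the Abramowitz functions satisfy the recurrence relation 2·J_n(z) = (n−1)·J_{n−2}(z) + z·J_{n−3}(z). -/

import Mathlib

open MeasureTheory

/-- The Abramowitz function `J_n`. -/
noncomputable def abramowitzJ (n : ℤ) (z : ℂ) : ℂ :=
  ∫ t in Set.Ioi (0 : ℝ), ((t ^ n : ℝ) : ℂ) * Complex.exp (-(t : ℂ) ^ 2 - z / (t : ℂ))

open Real Filter Set Topology

/-- `x ^ m * exp (-(c * x)) ≤ m! / c ^ m` for `x ≥ 0`, `c > 0`. -/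
lemma abram_aux_pow_exp {c x : ℝ} (hc : 0 < c) (hx : 0 ≤ x) (m : ℕ) :
    x ^ m * Real.exp (-(c * x)) ≤ m.factorial / c ^ m := by
  have h := Real.pow_div_factorial_le_exp _ (mul_nonneg hc.le hx) m
  have hm : (0:ℝ) < (m.factorial : ℝ) := by positivity
  have hcm : (0:ℝ) < c ^ m := by positivity
  have he : (0:ℝ) < Real.exp (c * x) := Real.exp_pos _
  rw [div_le_iff₀ hm, mul_pow] at h
  rw [Real.exp_neg, ← div_eq_mul_inv, div_le_div_iff₀ he hcm]
  calc x ^ m * c ^ m = c ^ m * x ^ m := mul_comm _ _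
    _ ≤ Real.exp (c * x) * (m.factorial : ℝ) := h
    _ = (m.factorial : ℝ) * Real.exp (c * x) := mul_comm _ _

/-- A uniform gaussian-type bound for the integrand. -/
lemma abram_bound_aux {c : ℝ} (hc : 0 < c) (k : ℤ) :
    ∃ B : ℝ, ∀ t : ℝ, 0 < t →
      t ^ k * Real.exp (-t ^ 2 - c / t) ≤ B * Real.exp (-(1/2) * t ^ 2) := by
  set m := k.natAbs with hm
  refine ⟨max ((2:ℝ) ^ m * m.factorial) ((m.factorial : ℝ) / c ^ m), fun t ht => ?_⟩
  have hE : (0:ℝ) < Real.exp (-(1/2) * t ^ 2) := Real.exp_pos _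
  have key : t ^ k * (Real.exp (-(1/2) * t ^ 2) * Real.exp (-(c / t))) ≤
      max ((2:ℝ) ^ m * m.factorial) ((m.factorial : ℝ) / c ^ m) := by
    rcases le_total 1 t with h1t | ht1
    · -- t ≥ 1
      have hk : t ^ k ≤ t ^ ((2 * m : ℕ) : ℤ) := by
        apply zpow_le_zpow_right₀ h1t
        calc k ≤ (k.natAbs : ℤ) := Int.le_natAbs
          _ ≤ ((2 * m : ℕ) : ℤ) := by omega
      rw [zpow_natCast] at hk
      have h3 : t ^ (2 * m) * Real.exp (-(1/2) * t ^ 2) ≤ (2:ℝ) ^ m * m.factorial := by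
        have := abram_aux_pow_exp (c := 1/2) (x := t ^ 2) (by norm_num) (sq_nonneg t) m
        rw [← pow_mul] at this
        calc t ^ (2 * m) * Real.exp (-(1/2) * t ^ 2)
            = (t ^ 2) ^ m * Real.exp (-(1/2 * t ^ 2)) := by rw [pow_mul]; ring_nf
          _ ≤ (m.factorial : ℝ) / (1/2) ^ m := by
              simpa [pow_mul, neg_mul] using
                abram_aux_pow_exp (c := 1/2) (x := t ^ 2) (by norm_num) (sq_nonneg t) m
          _ = (2:ℝ) ^ m * m.factorial := by
              rw [one_div, inv_pow, div_eq_mul_inv, inv_inv]; ring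
      have he3 : Real.exp (-(c / t)) ≤ 1 := by
        apply Real.exp_le_one_iff.mpr
        have : 0 ≤ c / t := div_nonneg hc.le (le_of_lt ht)
        linarith
      calc t ^ k * (Real.exp (-(1/2) * t ^ 2) * Real.exp (-(c / t)))
          ≤ t ^ (2 * m) * (Real.exp (-(1/2) * t ^ 2) * 1) :=
            mul_le_mul hk (mul_le_mul_of_nonneg_left he3 hE.le)
              (by positivity) (by positivity)
          _ = t ^ (2 * m) * Real.exp (-(1/2) * t ^ 2) := by ring
          _ ≤ (2:ℝ) ^ m * m.factorial := h3
          _ ≤ _ := le_max_left _ _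
    · -- t ≤ 1
      have hk : t ^ k ≤ t ^ (-(m : ℤ)) := by
        apply zpow_le_zpow_right_of_le_one₀ ht ht1
        have : (k.natAbs : ℤ) = |k| := (Int.abs_eq_natAbs k).symm
        calc -(m : ℤ) = -|k| := by rw [hm, this]
          _ ≤ k := neg_abs_le k
      have hkk : t ^ (-(m : ℤ)) = (t⁻¹) ^ m := by
        rw [zpow_neg, zpow_natCast, inv_pow]
      have h3 : (t⁻¹) ^ m * Real.exp (-(c / t)) ≤ (m.factorial : ℝ) / c ^ m := by
        have := abram_aux_pow_exp hc (inv_nonneg.mpr ht.le) m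
        simpa [div_eq_mul_inv] using this
      have he2 : Real.exp (-(1/2) * t ^ 2) ≤ 1 := by
        apply Real.exp_le_one_iff.mpr
        nlinarith [sq_nonneg t]
      calc t ^ k * (Real.exp (-(1/2) * t ^ 2) * Real.exp (-(c / t)))
          ≤ (t⁻¹) ^ m * (1 * Real.exp (-(c / t))) := by
            rw [← hkk]
            exact mul_le_mul hk (mul_le_mul_of_nonneg_right he2 (Real.exp_pos _).le)
              (by positivity) (zpow_nonneg ht.le _)
        _ = (t⁻¹) ^ m * Real.exp (-(c / t)) := by ring
        _ ≤ (m.factorial : ℝ) / c ^ m := h3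
        _ ≤ _ := le_max_right _ _
  have hsplitexp : Real.exp (-t ^ 2 - c / t) =
      (Real.exp (-(1/2) * t ^ 2) * Real.exp (-(c / t))) * Real.exp (-(1/2) * t ^ 2) := by
    rw [← Real.exp_add, ← Real.exp_add]; ring_nf
  rw [hsplitexp, ← mul_assoc]
  exact mul_le_mul_of_nonneg_right key hE.le

/-- The norm of the integrand. -/
lemma abram_norm_integrand (z : ℂ) (k : ℤ) {t : ℝ} (ht : 0 < t) :
    ‖((t ^ k : ℝ) : ℂ) * Complex.exp (-(t : ℂ) ^ 2 - z / (t : ℂ))‖ =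
      t ^ k * Real.exp (-t ^ 2 - z.re / t) := by
  rw [norm_mul, Complex.norm_exp,
    Complex.norm_real, Real.norm_eq_abs, abs_of_pos (zpow_pos ht k)]
  have h : (-(t : ℂ) ^ 2 - z / (t : ℂ)).re = -t ^ 2 - z.re / t := by
    simp only [Complex.sub_re, Complex.neg_re, Complex.div_ofReal_re, pow_two,
      Complex.mul_re, Complex.ofReal_re, Complex.ofReal_im]
    ring
  rw [h]

/-- Integrability of the integrand for every order. -/
lemma abram_integrable_aux {z : ℂ} (hz : 0 < z.re) (k : ℤ) :
    IntegrableOn (fun t : ℝ => ((t ^ k : ℝ) : ℂ) *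
      Complex.exp (-(t : ℂ) ^ 2 - z / (t : ℂ))) (Ioi 0) := by
  obtain ⟨B, hB⟩ := abram_bound_aux hz k
  apply Integrable.mono' (g := fun t : ℝ => B * Real.exp (-(1/2) * t ^ 2))
  · exact ((integrable_exp_neg_mul_sq (by norm_num : (0:ℝ) < 1/2)).const_mul B).integrableOn
  · apply ContinuousOn.aestronglyMeasurable ?_ measurableSet_Ioi
    apply ContinuousOn.mul
    · exact Complex.continuous_ofReal.comp_continuousOn
        (continuousOn_id.zpow₀ k (fun x hx => Or.inl (ne_of_gt hx)))
    · apply Complex.continuous_exp.comp_continuousOn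
      apply ContinuousOn.sub
      · exact ((Complex.continuous_ofReal.pow 2).neg).continuousOn
      · exact continuousOn_const.div Complex.continuous_ofReal.continuousOn
          (fun x hx => Complex.ofReal_ne_zero.mpr (ne_of_gt hx))
  · filter_upwards [ae_restrict_mem measurableSet_Ioi] with t ht
    rw [abram_norm_integrand z k ht]
    exact hB t ht

/-- The integrand tends to `0` at `+∞`. -/
lemma abram_tendsto_atTop {z : ℂ} (hz : 0 < z.re) (k : ℤ) :
    Tendsto (fun t : ℝ => ((t ^ k : ℝ) : ℂ) *
      Complex.exp (-(t : ℂ) ^ 2 - z / (t : ℂ))) atTop (𝓝 0) := by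
  set m := k.natAbs with hm
  apply squeeze_zero_norm' (a := fun t : ℝ => t ^ m * Real.exp (-t))
  · filter_upwards [eventually_ge_atTop (1:ℝ)] with t ht
    have ht0 : 0 < t := lt_of_lt_of_le one_pos ht
    rw [abram_norm_integrand z k ht0]
    have hk : t ^ k ≤ t ^ (m : ℤ) := zpow_le_zpow_right₀ ht Int.le_natAbs
    rw [zpow_natCast] at hk
    have he : Real.exp (-t ^ 2 - z.re / t) ≤ Real.exp (-t) := by
      apply Real.exp_le_exp.mpr
      have h1 : t ≤ t ^ 2 := by nlinarith
      have h2 : 0 ≤ z.re / t := div_nonneg hz.le ht0.le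
      linarith
    exact mul_le_mul hk he (Real.exp_pos _).le (pow_nonneg ht0.le m)
  · exact tendsto_pow_mul_exp_neg_atTop_nhds_zero m

lemma abram_tendsto_aux {c : ℝ} (hc : 0 < c) (m : ℕ) :
    Tendsto (fun x : ℝ => x ^ m * Real.exp (-(c * x))) atTop (𝓝 0) := by
  have h1 : Tendsto (fun x : ℝ => c * x) atTop atTop :=
    tendsto_id.const_mul_atTop hc
  have h2 := ((tendsto_pow_mul_exp_neg_atTop_nhds_zero m).comp h1).const_mul ((c ^ m)⁻¹)
  rw [mul_zero] at h2
  apply h2.congr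
  intro x
  have hcm : (c:ℝ) ^ m ≠ 0 := by positivity
  simp only [Function.comp_apply]
  rw [mul_pow, ← mul_assoc, ← mul_assoc, inv_mul_cancel₀ hcm, one_mul]

/-- The integrand tends to `0` as `t → 0⁺`. -/
lemma abram_tendsto_nhds {z : ℂ} (hz : 0 < z.re) (k : ℤ) :
    Tendsto (fun t : ℝ => ((t ^ k : ℝ) : ℂ) *
      Complex.exp (-(t : ℂ) ^ 2 - z / (t : ℂ))) (𝓝[>] (0:ℝ)) (𝓝 0) := by
  set m := k.natAbs with hm
  apply squeeze_zero_norm' (a := fun t : ℝ => (t⁻¹) ^ m * Real.exp (-(z.re * t⁻¹)))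
  · filter_upwards [Ioo_mem_nhdsGT one_pos] with t ht
    obtain ⟨ht0, ht1⟩ := ht
    rw [abram_norm_integrand z k ht0]
    have hk : t ^ k ≤ t ^ (-(m : ℤ)) := by
      apply zpow_le_zpow_right_of_le_one₀ ht0 ht1.le
      have : (k.natAbs : ℤ) = |k| := (Int.abs_eq_natAbs k).symm
      calc -(m : ℤ) = -|k| := by rw [hm, this]
        _ ≤ k := neg_abs_le k
    have hkk : t ^ (-(m : ℤ)) = (t⁻¹) ^ m := by
      rw [zpow_neg, zpow_natCast, inv_pow]
    have he : Real.exp (-t ^ 2 - z.re / t) ≤ Real.exp (-(z.re * t⁻¹)) := by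
      apply Real.exp_le_exp.mpr
      rw [div_eq_mul_inv]
      nlinarith [sq_nonneg t]
    have hfin := mul_le_mul hk he (Real.exp_pos _).le (zpow_nonneg ht0.le _)
    rwa [hkk] at hfin
  · exact ((abram_tendsto_aux hz m).comp tendsto_inv_nhdsGT_zero).congr fun x => rfl

theorem abramowitzJ_recurrence (n : ℤ) (z : ℂ) (hz : 0 < z.re) :
    2 * abramowitzJ n z = ((n : ℂ) - 1) * abramowitzJ (n - 2) z + z * abramowitzJ (n - 3) z := by
  set E : ℝ → ℂ := fun t => Complex.exp (-(t : ℂ) ^ 2 - z / (t : ℂ)) with hE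
  set F : ℝ → ℂ := fun t => if t = 0 then 0 else ((t ^ (n - 1) : ℝ) : ℂ) * E t with hF
  set G : ℝ → ℂ := fun t =>
    ((n : ℂ) - 1) * (((t ^ (n - 2) : ℝ) : ℂ) * E t) - 2 * (((t ^ n : ℝ) : ℂ) * E t)
      + z * (((t ^ (n - 3) : ℝ) : ℂ) * E t) with hG
  have hderiv : ∀ t ∈ Ioi (0:ℝ), HasDerivAt F (G t) t := by
    intro t ht
    have ht' : t ≠ 0 := ne_of_gt ht
    have htc : (t : ℂ) ≠ 0 := Complex.ofReal_ne_zero.mpr ht'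
    have hp : HasDerivAt (fun w : ℂ => w ^ (n - 1))
        (((n : ℂ) - 1) * (t : ℂ) ^ (n - 1 - 1)) (t : ℂ) := by
      have := hasDerivAt_zpow (n - 1) (t : ℂ) (Or.inl htc)
      simpa using this
    have hin : HasDerivAt (fun w : ℂ => -w ^ 2 - z / w)
        (-(2 * (t : ℂ)) - z * -(((t : ℂ) ^ 2)⁻¹)) (t : ℂ) := by
      have ha : HasDerivAt (fun w : ℂ => -w ^ 2) (-(2 * (t : ℂ))) (t : ℂ) := by
        exact (hasDerivAt_pow 2 (t : ℂ)).neg.congr_deriv (by simp)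
      have hb : HasDerivAt (fun w : ℂ => z / w) (z * -(((t : ℂ) ^ 2)⁻¹)) (t : ℂ) := by
        simpa [div_eq_mul_inv] using (hasDerivAt_inv htc).const_mul z
      exact ha.sub hb
    have h1 : HasDerivAt (fun w : ℂ => w ^ (n - 1) * Complex.exp (-w ^ 2 - z / w))
        (((n : ℂ) - 1) * (t : ℂ) ^ (n - 1 - 1) * Complex.exp (-(t : ℂ) ^ 2 - z / (t : ℂ))
          + (t : ℂ) ^ (n - 1) * (Complex.exp (-(t : ℂ) ^ 2 - z / (t : ℂ)) *
            (-(2 * (t : ℂ)) - z * -(((t : ℂ) ^ 2)⁻¹)))) (t : ℂ) :=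
      hp.mul hin.cexp
    have h2 := h1.comp_ofReal
    have heq : F =ᶠ[𝓝 t] fun s : ℝ => ((s : ℂ)) ^ (n - 1) *
        Complex.exp (-(s : ℂ) ^ 2 - z / (s : ℂ)) := by
      filter_upwards [isOpen_Ioi.mem_nhds ht] with s hs
      have hs' : s ≠ 0 := ne_of_gt hs
      simp only [hF, if_neg hs', hE, Complex.ofReal_zpow]
    have h3 := h2.congr_of_eventuallyEq heq
    refine h3.congr_deriv ?_
    -- show G t equals the derivative expression
    have e2 : (t : ℂ) ^ (n - 2) = (t : ℂ) ^ (n - 3) * (t : ℂ) := by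
      rw [← zpow_add_one₀ htc]; ring_nf
    have e1 : (t : ℂ) ^ (n - 1) = (t : ℂ) ^ (n - 3) * (t : ℂ) ^ (2:ℕ) := by
      rw [← zpow_natCast ((t:ℂ)) 2, ← zpow_add₀ htc]; ring_nf
    have e11 : (t : ℂ) ^ (n - 1 - 1) = (t : ℂ) ^ (n - 3) * (t : ℂ) := by
      rw [← zpow_add_one₀ htc]; ring_nf
    have e0 : (t : ℂ) ^ n = (t : ℂ) ^ (n - 3) * (t : ℂ) ^ (3:ℕ) := by
      rw [← zpow_natCast ((t:ℂ)) 3, ← zpow_add₀ htc]; ring_nf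
    simp only [hG, hE, Complex.ofReal_zpow]
    rw [e2, e1, e11, e0]
    have ht2 : ((t : ℂ) ^ 2) ≠ 0 := pow_ne_zero 2 htc
    field_simp
    ring
  have hcont : ContinuousWithinAt F (Ici (0:ℝ)) 0 := by
    have h0 : F 0 = 0 := if_pos rfl
    rw [ContinuousWithinAt, h0, show Ici (0:ℝ) = insert 0 (Ioi 0) from Set.Ioi_insert.symm,
      nhdsWithin_insert, tendsto_sup]
    constructor
    · simpa [h0] using tendsto_pure_nhds F 0
    · apply (abram_tendsto_nhds hz (n - 1)).congr'
      filter_upwards [self_mem_nhdsWithin] with t (ht : t ∈ Ioi (0:ℝ))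
      simp only [hF, if_neg (ne_of_gt (show (0:ℝ) < t from ht)), hE]
  have htop : Tendsto F atTop (𝓝 0) := by
    apply (abram_tendsto_atTop hz (n - 1)).congr'
    filter_upwards [eventually_gt_atTop (0:ℝ)] with t ht
    simp only [hF, if_neg (ne_of_gt ht), hE]
  have hGint : IntegrableOn G (Ioi (0:ℝ)) := by
    apply Integrable.add
    · exact (((abram_integrable_aux hz (n - 2)).const_mul _).sub
        ((abram_integrable_aux hz n).const_mul _))
    · exact (abram_integrable_aux hz (n - 3)).const_mul _
  have hFTC : ∫ t in Ioi (0:ℝ), G t = 0 - F 0 :=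
    integral_Ioi_of_hasDerivAt_of_tendsto hcont hderiv hGint htop
  rw [show F 0 = 0 from if_pos rfl, sub_zero] at hFTC
  have hsplit : ∫ t in Ioi (0:ℝ), G t =
      ((n : ℂ) - 1) * abramowitzJ (n - 2) z - 2 * abramowitzJ n z
        + z * abramowitzJ (n - 3) z := by
    simp only [hG, hE]
    unfold abramowitzJ
    have i3 : Integrable (fun t : ℝ => ((n : ℂ) - 1) * (((t ^ (n - 2) : ℝ) : ℂ) *
        Complex.exp (-(t : ℂ) ^ 2 - z / (t : ℂ)))) (volume.restrict (Ioi 0)) :=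
      (abram_integrable_aux hz (n - 2)).const_mul _
    have i4 : Integrable (fun t : ℝ => (2 : ℂ) * (((t ^ n : ℝ) : ℂ) *
        Complex.exp (-(t : ℂ) ^ 2 - z / (t : ℂ)))) (volume.restrict (Ioi 0)) :=
      (abram_integrable_aux hz n).const_mul _
    have i1 : Integrable (fun t : ℝ => ((n : ℂ) - 1) * (((t ^ (n - 2) : ℝ) : ℂ) *
        Complex.exp (-(t : ℂ) ^ 2 - z / (t : ℂ))) - (2 : ℂ) * (((t ^ n : ℝ) : ℂ) *
        Complex.exp (-(t : ℂ) ^ 2 - z / (t : ℂ)))) (volume.restrict (Ioi 0)) := i3.sub i4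
    have i2 : Integrable (fun t : ℝ => z * (((t ^ (n - 3) : ℝ) : ℂ) *
        Complex.exp (-(t : ℂ) ^ 2 - z / (t : ℂ)))) (volume.restrict (Ioi 0)) :=
      (abram_integrable_aux hz (n - 3)).const_mul _
    rw [integral_add i1 i2, integral_sub i3 i4,
      integral_const_mul, integral_const_mul, integral_const_mul]
  have h := hsplit.symm.trans hFTC
  linear_combination -h
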